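/- Let S be a compact metric space, X and Z sets, and τ : X × Z → S. Suppose there exist disjoint compact sets C, C̃ ⊆ S and sequences (a_i)_{i<ω} in X, (b_i)_{i<ω} in Z such that τ(a_j, b_i) ∈ C and τ(a_i, b_j) ∈ C̃ for all i < j. Then there exist subsequences (a'_i), (b'_i) such that both iterated limits lim_{i→∞} lim_{j→∞} τ(a'_i, b'_j) and lim_{j→∞} lim_{i→∞} τ(a'_i, b'_j) exist and are distinct. -/
import Mathlib


open Set Filter Topology

theorem stmt8 {S X Z : Type*} [MetricSpace S] [CompactSpace S]
    (τ : X × Z → S) (C Ct : Set S) (hC : IsCompact C) (hCt : IsCompact Ct)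
    (hdisj : C ∩ Ct = ∅) (a : ℕ → X) (b : ℕ → Z)
    (h : ∀ i j : ℕ, i < j → τ (a j, b i) ∈ C ∧ τ (a i, b j) ∈ Ct) :
    ∃ g : ℕ → ℕ, StrictMono g ∧ ∃ (u v : ℕ → S) (L1 L2 : S),
      (∀ i, Tendsto (fun j => τ (a (g i), b (g j))) atTop (𝓝 (u i))) ∧
      Tendsto u atTop (𝓝 L1) ∧
      (∀ j, Tendsto (fun i => τ (a (g i), b (g j))) atTop (𝓝 (v j))) ∧
      Tendsto v atTop (𝓝 L2) ∧ L1 ≠ L2 := by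
  -- Step 1: subsequence ψ in the b-index so that all "rows" converge
  obtain ⟨t, ψ, hψ, ht⟩ :=
    CompactSpace.tendsto_subseq (X := ℕ → S) (fun j => fun i => τ (a i, b j))
  have ht' : ∀ x, Tendsto (fun j => τ (a x, b (ψ j))) atTop (𝓝 (t x)) := by
    intro x
    exact (tendsto_pi_nhds.mp ht) x
  -- Step 2: subsequence φ in the a-index so that all "columns" (along ψ) converge
  obtain ⟨r, φ, hφ, hr0⟩ :=
    CompactSpace.tendsto_subseq (X := ℕ → S) (fun i => fun j => τ (a (ψ i), b (ψ j)))
  have hr : ∀ j, Tendsto (fun i => τ (a (ψ (φ i)), b (ψ j))) atTop (𝓝 (r j)) := by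
    intro j
    exact (tendsto_pi_nhds.mp hr0) j
  -- Step 3: further subsequences to make the diagonal limits exist
  obtain ⟨L1, χ1, hχ1, hL1⟩ :=
    CompactSpace.tendsto_subseq (X := S) (fun n => t (ψ (φ n)))
  obtain ⟨L2, χ2, hχ2, hL2⟩ :=
    CompactSpace.tendsto_subseq (X := S) (fun n => r (φ (χ1 n)))
  set θ : ℕ → ℕ := φ ∘ χ1 ∘ χ2 with hθ
  have hθmono : StrictMono θ := hφ.comp (hχ1.comp hχ2)
  set g : ℕ → ℕ := ψ ∘ θ with hg
  have hgmono : StrictMono g := hψ.comp hθmono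
  refine ⟨g, hgmono, fun i => t (g i), fun j => r (θ j), L1, L2, ?_, ?_, ?_, ?_, ?_⟩
  · intro i
    exact (ht' (g i)).comp hθmono.tendsto_atTop
  · have := hL1.comp (hχ2.tendsto_atTop)
    exact this
  · intro j
    exact (hr (θ j)).comp ((hχ1.comp hχ2).tendsto_atTop)
  · exact hL2
  · -- L1 ∈ Ct and L2 ∈ C
    have htmem : ∀ x, t x ∈ Ct := by
      intro x
      refine hCt.isClosed.mem_of_tendsto (ht' x) ?_
      filter_upwards [eventually_gt_atTop x] with j hj
      exact (h x (ψ j) (lt_of_lt_of_le hj (hψ.le_apply))).2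
    have hrmem : ∀ j, r j ∈ C := by
      intro j
      refine hC.isClosed.mem_of_tendsto (hr j) ?_
      filter_upwards [eventually_gt_atTop j] with i hi
      exact (h (ψ j) (ψ (φ i)) (hψ (lt_of_lt_of_le hi (hφ.le_apply)))).1
    have hL1mem : L1 ∈ Ct :=
      hCt.isClosed.mem_of_tendsto hL1 (Eventually.of_forall fun n => htmem _)
    have hL2mem : L2 ∈ C :=
      hC.isClosed.mem_of_tendsto hL2 (Eventually.of_forall fun n => hrmem _)
    intro hEq
    have : L1 ∈ C ∩ Ct := ⟨hEq ▸ hL2mem, hL1mem⟩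
    rw [hdisj] at this
    exact this
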